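/- For any ordering σ of n tasks, the makespan satisfies C_n ≥ a_{σ(j)} + Σ_{k=j}^{n} e_{σ(k)} for every j, and FCFS achieves equality in at least one such lower bound term, i.e., the FCFS makespan equals max_j (a_j + Σ_{k≥j} e_k) when arrivals are sorted nondecreasingly. -/

import Mathlib

/-- Completion time of processing tasks in the given order, starting from time `C`. -/
def comp (a e : ℕ → ℝ) : ℝ → List ℕ → ℝ
  | C, [] => C
  | C, i :: l => comp a e (max C (a i) + e i) l

/-- Makespan of a queue of tasks (indices). -/
def makespan (a e : ℕ → ℝ) (l : List ℕ) : ℝ := comp a e 0 l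

lemma comp_ge (a e : ℕ → ℝ) :
    ∀ (l : List ℕ) (C : ℝ), C + (l.map e).sum ≤ comp a e C l := by
  intro l
  induction l with
  | nil => intro C; simp [comp]
  | cons i t ih =>
    intro C
    simp only [comp, List.map_cons, List.sum_cons]
    calc C + (e i + (t.map e).sum) = (C + e i) + (t.map e).sum := by ring
    _ ≤ (max C (a i) + e i) + (t.map e).sum := by gcongr; exact le_max_left _ _
    _ ≤ _ := ih _

lemma comp_append (a e : ℕ → ℝ) : ∀ (l l' : List ℕ) (C : ℝ),
    comp a e C (l ++ l') = comp a e (comp a e C l) l' := by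
  intro l
  induction l with
  | nil => intro l' C; simp [comp]
  | cons i t ih => intro l' C; simp [comp, ih]

lemma sum_get (f : ℕ → ℝ) : ∀ l : List ℕ,
    ∑ k : Fin l.length, f (l.get k) = (l.map f).sum := by
  intro l
  induction l with
  | nil => simp
  | cons i t ih => simp [Fin.sum_univ_succ, ih]

lemma lower (a e : ℕ → ℝ) :
    ∀ (l : List ℕ) (C : ℝ) (j : Fin l.length),
      a (l.get j) + ∑ k ∈ Finset.univ.filter (fun k : Fin l.length => j ≤ k), e (l.get k)
        ≤ comp a e C l := by
  intro l
  induction l with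
  | nil => intro C j; exact absurd j.2 (by simp)
  | cons i t ih =>
    intro C j
    rcases j with ⟨jv, hj⟩
    match jv with
    | 0 =>
      have hfull : (Finset.univ.filter
          (fun k : Fin (i::t).length => (⟨0, hj⟩ : Fin (i::t).length) ≤ k)) = Finset.univ := by
        ext k; simp [Fin.le_def]
      rw [hfull, sum_get]
      simp only [List.get, comp, List.map_cons, List.sum_cons]
      have := comp_ge a e t (max C (a i) + e i)
      have h2 : a i + (e i + (t.map e).sum) ≤ (max C (a i) + e i) + (t.map e).sum := by
        have : a i ≤ max C (a i) := le_max_right _ _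
        linarith
      linarith
    | jv+1 =>
      have hjv : jv < t.length := Nat.lt_of_succ_lt_succ hj
      have hsum : ∑ k ∈ Finset.univ.filter
            (fun k : Fin (i::t).length => (⟨jv+1, hj⟩ : Fin (i::t).length) ≤ k), e ((i::t).get k)
          = ∑ k ∈ Finset.univ.filter
            (fun k : Fin t.length => (⟨jv, hjv⟩ : Fin t.length) ≤ k), e (t.get k) := by
        rw [Finset.sum_filter, Finset.sum_filter]
        simp only [List.length_cons]
        rw [Fin.sum_univ_succ]
        simp [Fin.le_def, Nat.succ_le_succ_iff]
      have hget : (i::t).get ⟨jv+1, hj⟩ = t.get ⟨jv, hjv⟩ := rfl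
      rw [hsum, hget]
      simpa [comp] using ih (max C (a i) + e i) ⟨jv, hjv⟩


lemma fcfs (a e : ℕ → ℝ) (ha : ∀ i, 0 ≤ a i) :
    ∀ (n : ℕ) (h : n ≠ 0),
      makespan a e (List.range n) =
        (Finset.range n).sup' (Finset.nonempty_range_iff.mpr h)
          (fun j => a j + ∑ k ∈ Finset.Ico j n, e k) := by
  intro n
  induction n with
  | zero => intro h; exact absurd rfl h
  | succ m ih =>
    intro h
    rcases Nat.eq_zero_or_pos m with hm | hm
    · subst hm
      simp [makespan, comp, List.range_succ, max_eq_right (ha 0)]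
    · have hM : makespan a e (List.range (m+1))
          = max (makespan a e (List.range m)) (a m) + e m := by
        rw [List.range_succ, makespan, comp_append]
        rfl
      have hT := ih hm.ne'
      rw [hM, hT]
      simp only [Finset.range_add_one]
      rw [Finset.sup'_insert (H := Finset.nonempty_range_iff.mpr hm.ne')
        (f := fun j => a j + ∑ k ∈ Finset.Ico j (m+1), e k)]
      have hcong : ((Finset.range m).sup' (Finset.nonempty_range_iff.mpr hm.ne')
            (fun j => a j + ∑ k ∈ Finset.Ico j (m+1), e k))
          = ((Finset.range m).sup' (Finset.nonempty_range_iff.mpr hm.ne')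
            (fun j => (a j + ∑ k ∈ Finset.Ico j m, e k) + e m)) := by
        apply Finset.sup'_congr _ rfl
        intro j hj
        rw [Finset.sum_Ico_succ_top (le_of_lt (Finset.mem_range.mp hj))]
        ring
      rw [hcong, ← Finset.sup'_add]
      rw [← max_add_add_right, max_comm]
      simp

/-- for any ordering, the makespan is bounded below by
`a_{σ(j)} + Σ_{k ≥ j} e_{σ(k)}` for every position `j`; and when arrivals are sorted
nondecreasingly the FCFS makespan equals `max_j (a j + Σ_{k ≥ j} e k)`. -/
theorem makespan_lower_and_fcfs_eq (n : ℕ) (hn : 0 < n) (a e : ℕ → ℝ)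
    (ha : ∀ i, 0 ≤ a i) (he : ∀ i, 0 ≤ e i) (hsorted : Monotone a) :
    (∀ l : List ℕ, ∀ j : Fin l.length,
      a (l.get j) +
        ∑ k ∈ Finset.univ.filter (fun k : Fin l.length => j ≤ k), e (l.get k) ≤
      makespan a e l) ∧
    makespan a e (List.range n) =
      (Finset.range n).sup' (Finset.nonempty_range_iff.mpr hn.ne')
        (fun j => a j + ∑ k ∈ Finset.Ico j n, e k) := by
  constructor
  · intro l j; exact lower a e l 0 j
  · exact fcfs a e ha n hn.ne'
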